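/- Fix ρ > 0, B > 0, Ā ≥ 0 with Ā ≥ B, R̄ ≥ 0, and define J(u) = ( (Ā - B)/2·u² + (R̄ + Ā·ρ)·u + (ρ/2)·(2·R̄ + Ā·ρ) ) / (ρ + u) for u ≥ 0. Then J is monotonically nondecreasing on [0,∞); consequently the minimizer of J over any interval [0, ū] with ū ≥ 0 is u* = 0. -/

import Mathlib

open Set

theorem rhcp3_case1_AgeB (ρ B Abar Rbar : ℝ)
    (hρ : 0 < ρ) (hB : 0 < B) (hAbar : 0 ≤ Abar) (hAB : B ≤ Abar) (hRbar : 0 ≤ Rbar)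
    (J : ℝ → ℝ)
    (hJ : J = fun u =>
      ((Abar - B) / 2 * u ^ 2 + (Rbar + Abar * ρ) * u
        + (ρ / 2) * (2 * Rbar + Abar * ρ)) / (ρ + u)) :
    MonotoneOn J (Set.Ici 0) ∧
    ∀ ubar ≥ (0 : ℝ), ∀ u ∈ Set.Icc (0 : ℝ) ubar, J 0 ≤ J u := by
  subst hJ
  have hmono : MonotoneOn (fun u =>
      ((Abar - B) / 2 * u ^ 2 + (Rbar + Abar * ρ) * u
        + (ρ / 2) * (2 * Rbar + Abar * ρ)) / (ρ + u)) (Set.Ici 0) := by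
    intro x hx y hy hxy
    simp only [Set.mem_Ici] at hx hy
    have h1 : 0 < ρ + x := by linarith
    have h2 : 0 < ρ + y := by linarith
    rw [div_le_div_iff₀ h1 h2]
    have hc : 0 ≤ Abar - B := by linarith
    have hd : 0 ≤ y - x := by linarith
    nlinarith [mul_nonneg (mul_nonneg hc hd) (add_nonneg (mul_nonneg hρ.le (add_nonneg hx hy)) (mul_nonneg hx hy)),
      mul_nonneg (mul_nonneg hAbar (mul_pos hρ hρ).le) hd]
  exact ⟨hmono, fun ubar _ u hu => hmono (le_refl (0:ℝ)) hu.1 hu.1⟩
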